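/- For every real number λ, the group G acts transitively on the set M_{λ,1} = {X ∈ ℝ^{n+2} : Φ(X,X) = λ, Φ(I,X) = 1}: for any X, Y ∈ M_{λ,1} there exists A ∈ G with A X = Y. (Flat-model orbit decomposition: each 'Minkowski slice' M_{λ,σ=1} is a single orbit of the Poincaré subgroup.) -/

import Mathlib

/-- The diagonal symmetric bilinear form on `ℝ^m` whose first `k` diagonal
entries are `-1` and the remaining ones are `+1`. -/
def formSig (k m : ℕ) (x y : Fin m → ℝ) : ℝ :=
  ∑ i : Fin m, (if (i : ℕ) < k then -(x i * y i) else x i * y i)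

/-- `A` belongs to the 'Poincaré subgroup' of `SL(n+2,ℝ)` determined by the signature
`(2,n)` form `Φ = formSig 2 (n+2)` and the null vector `I`: it has determinant one,
preserves `Φ`, and fixes `I`. -/
def IsPoincareMat (n : ℕ) (I : Fin (n + 2) → ℝ)
    (A : Matrix (Fin (n + 2)) (Fin (n + 2)) ℝ) : Prop :=
  A.det = 1 ∧
    (∀ x y : Fin (n + 2) → ℝ,
      formSig 2 (n + 2) (A.mulVec x) (A.mulVec y) = formSig 2 (n + 2) x y) ∧
    A.mulVec I = I

/-- The set `M_{λ,s} = {X : Φ(X,X) = λ, Φ(I,X) = s, X ∉ ℝ·I}`. -/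
def Mset (n : ℕ) (I : Fin (n + 2) → ℝ) (lam s : ℝ) : Set (Fin (n + 2) → ℝ) :=
  {X | formSig 2 (n + 2) X X = lam ∧ formSig 2 (n + 2) I X = s ∧ ¬ ∃ c : ℝ, X = c • I}

open Matrix

section Aux

lemma formSig_symm (k m : ℕ) (x y : Fin m → ℝ) :
    formSig k m x y = formSig k m y x := by
  unfold formSig
  refine Finset.sum_congr rfl fun i _ => ?_
  split <;> ring

lemma formSig_add_right (k m : ℕ) (x y z : Fin m → ℝ) :
    formSig k m x (y + z) = formSig k m x y + formSig k m x z := by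
  unfold formSig
  rw [← Finset.sum_add_distrib]
  refine Finset.sum_congr rfl fun i _ => ?_
  simp only [Pi.add_apply]
  split <;> ring

lemma formSig_sub_right (k m : ℕ) (x y z : Fin m → ℝ) :
    formSig k m x (y - z) = formSig k m x y - formSig k m x z := by
  unfold formSig
  rw [← Finset.sum_sub_distrib]
  refine Finset.sum_congr rfl fun i _ => ?_
  simp only [Pi.sub_apply]
  split <;> ring

lemma formSig_smul_right (k m : ℕ) (c : ℝ) (x y : Fin m → ℝ) :
    formSig k m x (c • y) = c * formSig k m x y := by
  unfold formSig
  rw [Finset.mul_sum]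
  refine Finset.sum_congr rfl fun i _ => ?_
  simp only [Pi.smul_apply, smul_eq_mul]
  split <;> ring

lemma formSig_add_left (k m : ℕ) (x y z : Fin m → ℝ) :
    formSig k m (x + y) z = formSig k m x z + formSig k m y z := by
  rw [formSig_symm, formSig_add_right, formSig_symm k m z x, formSig_symm k m z y]

lemma formSig_sub_left (k m : ℕ) (x y z : Fin m → ℝ) :
    formSig k m (x - y) z = formSig k m x z - formSig k m y z := by
  rw [formSig_symm, formSig_sub_right, formSig_symm k m z x, formSig_symm k m z y]

lemma formSig_smul_left (k m : ℕ) (c : ℝ) (x y : Fin m → ℝ) :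
    formSig k m (c • x) y = c * formSig k m x y := by
  rw [formSig_symm, formSig_smul_right, formSig_symm]

/-- The signed covector realizing `formSig` as a dot product. -/
def sigVec (k m : ℕ) (x : Fin m → ℝ) : Fin m → ℝ :=
  fun i => if (i : ℕ) < k then -(x i) else x i

lemma formSig_eq_dot (k m : ℕ) (x y : Fin m → ℝ) :
    sigVec k m x ⬝ᵥ y = formSig k m x y := by
  unfold formSig sigVec dotProduct
  refine Finset.sum_congr rfl fun i _ => ?_
  by_cases h : (i : ℕ) < k
  · simp only [if_pos h]; ring
  · simp only [if_neg h]

lemma rank1_mulVec {m : ℕ} (a b v : Fin m → ℝ) :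
    (Matrix.replicateCol Unit a * Matrix.replicateRow Unit b) *ᵥ v = (b ⬝ᵥ v) • a := by
  rw [← Matrix.mulVec_mulVec, Matrix.replicateRow_mulVec_eq_const]
  ext i
  simp [Matrix.mulVec, dotProduct, mul_comm]

lemma col_neg' {m : ℕ} (a : Fin m → ℝ) :
    Matrix.replicateCol Unit (-a) = - Matrix.replicateCol Unit a := by
  ext i j
  simp

end Aux

/-- For every `λ ∈ ℝ`, the Poincaré subgroup acts transitively on the Minkowski slice
`M_{λ,1}` of the flat model. -/
theorem poincare_transitive_on_minkowski_slice
    (n : ℕ) (hn : 2 ≤ n) (I : Fin (n + 2) → ℝ) (hI : I ≠ 0)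
    (hII : formSig 2 (n + 2) I I = 0) (lam : ℝ)
    (X Y : Fin (n + 2) → ℝ) (hX : X ∈ Mset n I lam 1) (hY : Y ∈ Mset n I lam 1) :
    ∃ A : Matrix (Fin (n + 2)) (Fin (n + 2)) ℝ, IsPoincareMat n I A ∧ A.mulVec X = Y := by
  obtain ⟨hXX, hIX, -⟩ := hX
  obtain ⟨hYY, hIY, -⟩ := hY
  -- the translation vector
  set u : Fin (n + 2) → ℝ := Y - X with hu
  set q : ℝ := formSig 2 (n + 2) u u with hq
  set w : Fin (n + 2) → ℝ := u - (q / 2) • I with hw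
  have hIu : formSig 2 (n + 2) I u = 0 := by
    rw [hu, formSig_sub_right, hIX, hIY]; ring
  have huI : formSig 2 (n + 2) u I = 0 := by rw [formSig_symm]; exact hIu
  have hIw : formSig 2 (n + 2) I w = 0 := by
    rw [hw, formSig_sub_right, formSig_smul_right, hIu, hII]; ring
  -- the two shears
  set Q : Matrix (Fin (n + 2)) (Fin (n + 2)) ℝ :=
    1 + Matrix.replicateCol Unit w * Matrix.replicateRow Unit (sigVec 2 (n + 2) I) with hQ
  set P : Matrix (Fin (n + 2)) (Fin (n + 2)) ℝ :=
    1 - Matrix.replicateCol Unit I * Matrix.replicateRow Unit (sigVec 2 (n + 2) u) with hP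
  set A : Matrix (Fin (n + 2)) (Fin (n + 2)) ℝ := Q * P with hA
  have hPv : ∀ v : Fin (n + 2) → ℝ, P *ᵥ v = v - (formSig 2 (n + 2) u v) • I := by
    intro v
    rw [hP, Matrix.sub_mulVec, Matrix.one_mulVec, rank1_mulVec, formSig_eq_dot]
  have hQv : ∀ v : Fin (n + 2) → ℝ, Q *ᵥ v = v + (formSig 2 (n + 2) I v) • w := by
    intro v
    rw [hQ, Matrix.add_mulVec, Matrix.one_mulVec, rank1_mulVec, formSig_eq_dot]
  have hAv : ∀ v : Fin (n + 2) → ℝ, A *ᵥ v = v + (formSig 2 (n + 2) I v) • w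
      - (formSig 2 (n + 2) u v) • I := by
    intro v
    rw [hA, ← Matrix.mulVec_mulVec, hPv, hQv]
    have h1 : formSig 2 (n + 2) I (v - formSig 2 (n + 2) u v • I) = formSig 2 (n + 2) I v := by
      rw [formSig_sub_right, formSig_smul_right, hII]; ring
    rw [h1]
    abel
  have hAv2 : ∀ v : Fin (n + 2) → ℝ, A *ᵥ v = v + (formSig 2 (n + 2) I v) • u
      - ((formSig 2 (n + 2) u v) + q / 2 * (formSig 2 (n + 2) I v)) • I := by
    intro v
    rw [hAv, hw]
    module
  have hAI : A *ᵥ I = I := by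
    rw [hAv, hII, huI]
    simp
  have hdet : A.det = 1 := by
    have hQd : Q.det = 1 := by
      rw [hQ, Matrix.det_one_add_replicateCol_mul_replicateRow, formSig_eq_dot, hIw]; ring
    have hPd : P.det = 1 := by
      have h2 : P = 1 + Matrix.replicateCol Unit (-I) * Matrix.replicateRow Unit (sigVec 2 (n + 2) u) := by
        rw [hP]
        rw [sub_eq_add_neg, col_neg', Matrix.neg_mul]
      have h3 : sigVec 2 (n + 2) u ⬝ᵥ (-I) = -(formSig 2 (n + 2) u I) := by
        rw [← formSig_eq_dot]
        simp [dotProduct]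
      rw [h2, Matrix.det_one_add_replicateCol_mul_replicateRow, h3, huI]; ring
    rw [hA, Matrix.det_mul, hQd, hPd]; ring
  have hiso : ∀ v z : Fin (n + 2) → ℝ,
      formSig 2 (n + 2) (A *ᵥ v) (A *ᵥ z) = formSig 2 (n + 2) v z := by
    intro v z
    rw [hAv2 v, hAv2 z]
    simp only [formSig_add_left, formSig_sub_left, formSig_smul_left,
      formSig_add_right, formSig_sub_right, formSig_smul_right]
    rw [formSig_symm 2 (n + 2) v u, formSig_symm 2 (n + 2) v I, hII, hIu, huI, ← hq]
    ring
  refine ⟨A, ⟨hdet, hiso, hAI⟩, ?_⟩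
  -- finally, A X = Y
  rw [hAv2 X, hIX]
  have hXY : formSig 2 (n + 2) u X = formSig 2 (n + 2) X Y - lam := by
    rw [hu, formSig_sub_left, hXX, formSig_symm 2 (n + 2) Y X]
  have hquu : q = 2 * lam - 2 * formSig 2 (n + 2) X Y := by
    rw [hq, hu, formSig_sub_left, formSig_sub_right, formSig_sub_right,
      hXX, hYY, formSig_symm 2 (n + 2) Y X]; ring
  rw [hXY, hquu, hu]
  module
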